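/- arXiv:1309.6968 — 2 statements merged into one kernel-verified Lean document; each statement's English description precedes it below -/
import Mathlib

section
/- Let T(x) = sin(π√(x+1/2)/10) / (W(x)√(x+1/2)) where W(x) = ∏_{n≥1}(1 − x/(100·2^{2n} − 1/2)). Then for every N > 0, T(n) = o(n^{−N}) as n → +∞ along the positive integers. -/
open Filter Finset Real

noncomputable def gg (n j : ℕ) : ℝ := 1 - (n : ℝ) / (100 * 4 ^ (j + 1) - 1 / 2)

lemma four_pow_ge_one (j : ℕ) : (1:ℝ) ≤ 4 ^ (j+1) := one_le_pow₀ (by norm_num)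

lemma cc_pos (j : ℕ) : (0:ℝ) < 100 * 4 ^ (j + 1) - 1 / 2 := by
  have := four_pow_ge_one j; nlinarith

lemma cc_ge (j : ℕ) : (50:ℝ) * 4 ^ (j + 1) ≤ 100 * 4 ^ (j + 1) - 1 / 2 := by
  have := four_pow_ge_one j; nlinarith

lemma n_lt_cc (n j : ℕ) (h : n ≤ j) : 2 * (n:ℝ) ≤ 100 * 4 ^ (j + 1) - 1 / 2 := by
  have h1 : (n:ℝ) < 2 ^ n := by exact_mod_cast (Nat.lt_two_pow_self (n := n))
  have h2 : (2:ℝ) ^ n ≤ 4 ^ (j+1) := by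
    calc (2:ℝ) ^ n ≤ 2 ^ (j+1) := pow_le_pow_right₀ (by norm_num) (by omega)
    _ ≤ 4 ^ (j+1) := pow_le_pow_left₀ (by norm_num) (by norm_num) _
  have h3 := four_pow_ge_one j
  nlinarith

lemma gg_tail_pos (n j : ℕ) (h : n ≤ j) : 0 < gg n j := by
  have h1 := n_lt_cc n j h
  have h2 := cc_pos j
  have h3 : (n:ℝ) / (100 * 4 ^ (j + 1) - 1 / 2) < 1 := by
    rw [div_lt_one h2]
    have : (0:ℝ) ≤ n := Nat.cast_nonneg n
    nlinarith
  unfold gg; linarith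

lemma gg_tail_le_one (n j : ℕ) : gg n j ≤ 1 := by
  have h2 := cc_pos j
  have : 0 ≤ (n:ℝ) / (100 * 4 ^ (j + 1) - 1 / 2) := by positivity
  unfold gg; linarith

lemma gg_log_summable (n : ℕ) : Summable (fun j => Real.log (gg n (j + n))) := by
  rw [← summable_abs_iff]
  refine Summable.of_nonneg_of_le (fun j => abs_nonneg _) ?_
    (((summable_geometric_of_lt_one (r := 1/4) (by norm_num) (by norm_num))).mul_left
      ((n:ℝ) / (25 * 4 ^ (n + 1))))
  · intro j
    obtain ⟨c, hc⟩ : ∃ c : ℝ, c = 100 * 4 ^ (j + n + 1) - 1 / 2 := ⟨_, rfl⟩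
    have hcpos : 0 < c := hc ▸ cc_pos (j + n)
    have hcge : 50 * 4 ^ (j + n + 1) ≤ c := hc ▸ cc_ge (j + n)
    have h2n : 2 * (n:ℝ) ≤ c := hc ▸ n_lt_cc n (j + n) (by omega)
    obtain ⟨x, hxdef⟩ : ∃ x : ℝ, x = (n:ℝ) / c := ⟨_, rfl⟩
    have hx0 : (0:ℝ) ≤ x := by rw [hxdef]; positivity
    have hx2 : x ≤ 1/2 := by rw [hxdef, div_le_iff₀ hcpos]; linarith
    have hg : gg n (j + n) = 1 - x := by rw [hxdef, hc]; rfl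
    have h1 : (0:ℝ) < 1 - x := by
      have := gg_tail_pos n (j + n) (by omega); rwa [hg] at this
    have habs : |Real.log (gg n (j + n))| = - Real.log (gg n (j + n)) :=
      abs_of_nonpos (Real.log_nonpos (le_of_lt (gg_tail_pos n (j+n) (by omega)))
        (gg_tail_le_one n (j+n)))
    have hlogbound : - Real.log (gg n (j + n)) ≤ 2 * x := by
      rw [hg, ← Real.log_inv]
      have hinv : (1 - x)⁻¹ ≤ 1 + 2 * x :=
        (inv_le_iff_one_le_mul₀ h1).mpr (by nlinarith)
      calc Real.log (1 - x)⁻¹ ≤ (1 - x)⁻¹ - 1 := Real.log_le_sub_one_of_pos (by positivity)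
      _ ≤ 2 * x := by linarith
    have hxgeom : 2 * x ≤ (n:ℝ) / (25 * 4 ^ (n + 1)) * (1/4) ^ j := by
      have hcge2 : (50:ℝ) * 4 ^ (n+1) * 4 ^ j ≤ c := by
        have : (4:ℝ) ^ (j + n + 1) = 4 ^ j * 4 ^ (n+1) := by ring
        calc (50:ℝ) * 4 ^ (n+1) * 4 ^ j = 50 * 4 ^ (j + n + 1) := by rw [this]; ring
        _ ≤ c := hcge
      have h4j : (0:ℝ) < 4 ^ j := by positivity
      have h4n : (0:ℝ) < 4 ^ (n+1) := by positivity
      have hxle : x ≤ (n:ℝ) / (50 * 4 ^ (n+1) * 4 ^ j) := by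
        rw [hxdef]
        exact div_le_div_of_nonneg_left (Nat.cast_nonneg n) (by positivity) hcge2
      calc 2 * x ≤ 2 * ((n:ℝ) / (50 * 4 ^ (n+1) * 4 ^ j)) := by linarith
      _ = (n:ℝ) / (25 * 4 ^ (n + 1)) * (1/4) ^ j := by
        rw [div_pow, one_pow]; field_simp; ring
    rw [habs]; linarith

lemma gg_mult (n : ℕ) : Multipliable (gg n) := by
  apply Multipliable.comp_nat_add (k := n)
  have hpos : ∀ j : ℕ, 0 < gg n (j + n) := fun j => gg_tail_pos n (j + n) (by omega)
  have h := (gg_log_summable n).hasSum.rexp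
  simp only [Function.comp_def] at h
  have hfun : (fun j => Real.exp (Real.log (gg n (j+n)))) = fun j => gg n (j+n) :=
    funext fun j => Real.exp_log (hpos j)
  rw [hfun] at h
  exact h.multipliable

lemma prod_one_sub_ge (x : ℕ → ℝ) (t : ℕ) (h0 : ∀ i, 0 ≤ x i) (h1 : ∀ i, x i ≤ 1) :
    1 - ∑ i ∈ range t, x i ≤ ∏ i ∈ range t, (1 - x i) := by
  induction t with
  | zero => simp
  | succ t ih =>
    rw [Finset.prod_range_succ, Finset.sum_range_succ]
    have hS : 0 ≤ ∑ i ∈ range t, x i := Finset.sum_nonneg fun i _ => h0 i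
    nlinarith [h0 t, h1 t, ih]

lemma gg_eq (n j : ℕ) : gg n j = ((100 * 4 ^ (j + 1) - 1 / 2) - n) / (100 * 4 ^ (j + 1) - 1 / 2) := by
  have h := cc_pos j
  unfold gg
  rw [sub_div, div_self (ne_of_gt h)]

lemma gg_abs_ge_half (n j : ℕ) :
    1 / 2 / (100 * 4 ^ (j + 1) - 1 / 2) ≤ |gg n j| := by
  have h := cc_pos j
  rw [gg_eq, abs_div, abs_of_pos h]
  gcongr
  rcases le_or_gt (100 * 4 ^ (j + 1) : ℕ) n with hle | hlt
  · have : (100 * 4 ^ (j + 1) : ℝ) ≤ n := by exact_mod_cast hle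
    rw [abs_sub_comm, le_abs]
    left; push_cast; linarith
  · have : (n : ℝ) + 1 ≤ 100 * 4 ^ (j + 1) := by exact_mod_cast hlt
    rw [le_abs]
    left; push_cast; linarith

lemma head_bound (n m : ℕ) (hn1 : 200 * 4 ^ m ≤ (n:ℝ)) :
    (2:ℝ) ^ (m * m - m) ≤ ∏ j ∈ range m, |gg n j| := by
  rcases Nat.eq_zero_or_pos m with rfl | hm0
  · simp
  have hstep : ∀ j ∈ range m, (4:ℝ) ^ m / 4 ^ (j + 1) ≤ |gg n j| := by
    intro j hj
    rw [Finset.mem_range] at hj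
    have hc := cc_pos j
    have h4 : (4:ℝ) ^ (j + 1) ≤ 4 ^ m := pow_le_pow_right₀ (by norm_num) (by omega)
    have h4p : (0:ℝ) < 4 ^ (j + 1) := by positivity
    have h4mp : (0:ℝ) < 4 ^ m := by positivity
    have hcle : (100:ℝ) * 4 ^ (j + 1) - 1 / 2 ≤ 100 * 4 ^ m := by nlinarith
    have hnc : (100:ℝ) * 4 ^ m ≤ (n:ℝ) - (100 * 4 ^ (j + 1) - 1 / 2) := by nlinarith
    rw [gg_eq, abs_div, abs_of_pos hc, abs_sub_comm,
      abs_of_nonneg (by nlinarith : (0:ℝ) ≤ (n:ℝ) - (100 * 4 ^ (j + 1) - 1 / 2))]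
    rw [div_le_div_iff₀ h4p hc]
    calc (4:ℝ) ^ m * (100 * 4 ^ (j + 1) - 1 / 2) ≤ 4 ^ m * (100 * 4 ^ (j+1)) := by nlinarith
    _ = 100 * 4 ^ m * 4 ^ (j+1) := by ring
    _ ≤ ((n:ℝ) - (100 * 4 ^ (j + 1) - 1 / 2)) * 4 ^ (j+1) := by nlinarith
  have hprod : ∏ j ∈ range m, ((4:ℝ) ^ m / 4 ^ (j + 1)) ≤ ∏ j ∈ range m, |gg n j| :=
    Finset.prod_le_prod (fun j _ => by positivity) hstep
  refine le_trans ?_ hprod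
  rw [Finset.prod_div_distrib, Finset.prod_const, Finset.card_range, ← pow_mul,
    Finset.prod_pow_eq_pow_sum]
  obtain ⟨s, hs⟩ : ∃ s, s = ∑ j ∈ range m, (j + 1) := ⟨_, rfl⟩
  rw [← hs]
  have hgauss : (∑ i ∈ range m, i) * 2 = m * (m - 1) := Finset.sum_range_id_mul_two m
  have hsum : s = (∑ i ∈ range m, i) + m := by
    rw [hs, Finset.sum_add_distrib, Finset.sum_const, Finset.card_range, smul_eq_mul, mul_one]
  have hmm : m ≤ m * m := Nat.le_mul_of_pos_left m hm0
  have hmm1 : m * (m - 1) = m * m - m := by rw [← Nat.pred_eq_sub_one, Nat.mul_pred]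
  have hdiv : (4:ℝ) ^ (m * m) / 4 ^ s = 4 ^ (m * m - s) := by
    rw [eq_comm, eq_div_iff (by positivity), ← pow_add]
    congr 1; omega
  have hexp : m * m - m = 2 * (m * m - s) := by omega
  rw [hdiv, hexp, show (4:ℝ) = 2 ^ 2 by norm_num, ← pow_mul]

lemma middle_bound (n m : ℕ) (hn1 : 200 * 4 ^ m ≤ (n:ℝ)) :
    (1 / (64 * (n:ℝ))) ^ 3 ≤ ∏ j ∈ Finset.Ico m (m + 3), |gg n j| := by
  have hnpos : (0:ℝ) < n := by
    have : (0:ℝ) < 200 * 4 ^ m := by positivity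
    linarith
  have hstep : ∀ j ∈ Finset.Ico m (m + 3), 1 / (64 * (n:ℝ)) ≤ |gg n j| := by
    intro j hj
    rw [Finset.mem_Ico] at hj
    refine le_trans ?_ (gg_abs_ge_half n j)
    have hc := cc_pos j
    have h4 : (4:ℝ) ^ (j + 1) ≤ 4 ^ (m + 3) := pow_le_pow_right₀ (by norm_num) (by omega)
    have h4m : ((4:ℝ) ^ (m + 3)) = 64 * 4 ^ m := by rw [pow_add]; ring
    rw [div_le_div_iff₀ (by positivity) hc]
    have h4mp : (0:ℝ) < 4 ^ m := by positivity
    nlinarith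
  calc (1 / (64 * (n:ℝ))) ^ 3 = ∏ _j ∈ Finset.Ico m (m + 3), (1 / (64 * (n:ℝ))) := by
        rw [Finset.prod_const, Nat.card_Ico]; norm_num
  _ ≤ ∏ j ∈ Finset.Ico m (m + 3), |gg n j| :=
        Finset.prod_le_prod (fun j _ => by positivity) hstep

lemma gg_pos' (n m j : ℕ) (hn2 : (n:ℝ) ≤ 1000 * 4 ^ m) (hj : m + 3 ≤ j) :
    2 * (n:ℝ) ≤ 100 * 4 ^ (j + 1) - 1 / 2 := by
  have h4 : (4:ℝ) ^ (m + 4) ≤ 4 ^ (j + 1) := pow_le_pow_right₀ (by norm_num) (by omega)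
  have h4m : ((4:ℝ) ^ (m + 4)) = 256 * 4 ^ m := by rw [pow_add]; ring
  have h4mp : (0:ℝ) < 4 ^ m := by positivity
  have h1 : (1:ℝ) ≤ 4 ^ m := one_le_pow₀ (by norm_num)
  nlinarith

lemma tail_bound (n m P : ℕ) (hn2 : (n:ℝ) ≤ 1000 * 4 ^ m) :
    (1:ℝ) / 2 ≤ ∏ j ∈ Finset.Ico (m + 3) P, gg n j := by
  rcases le_or_gt P (m + 3) with hP | hP
  · rw [Finset.Ico_eq_empty (by omega)]; norm_num
  rw [Finset.prod_Ico_eq_prod_range]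
  have hx0 : ∀ i : ℕ, 0 ≤ (n:ℝ) / (100 * 4 ^ (m + 3 + i + 1) - 1 / 2) := by
    intro i
    have := cc_pos (m + 3 + i)
    positivity
  have hx1 : ∀ i : ℕ, (n:ℝ) / (100 * 4 ^ (m + 3 + i + 1) - 1 / 2) ≤ 1 := by
    intro i
    have hc := cc_pos (m + 3 + i)
    have h2 := gg_pos' n m (m + 3 + i) hn2 (by omega)
    rw [div_le_one hc]
    have : (0:ℝ) ≤ n := Nat.cast_nonneg n
    linarith
  have key := prod_one_sub_ge (fun i => (n:ℝ) / (100 * 4 ^ (m + 3 + i + 1) - 1 / 2))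
    (P - (m + 3)) hx0 hx1
  have hsum : ∑ i ∈ range (P - (m + 3)), (n:ℝ) / (100 * 4 ^ (m + 3 + i + 1) - 1 / 2) ≤ 1 / 2 := by
    have hterm : ∀ i : ℕ, (n:ℝ) / (100 * 4 ^ (m + 3 + i + 1) - 1 / 2) ≤ 1 / 8 * (1 / 4) ^ i := by
      intro i
      have hcge : (50:ℝ) * 4 ^ (m + 3 + i + 1) ≤ 100 * 4 ^ (m + 3 + i + 1) - 1 / 2 :=
        cc_ge (m + 3 + i)
      have hexp : ((4:ℝ)) ^ (m + 3 + i + 1) = 256 * 4 ^ m * 4 ^ i := by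
        rw [show m + 3 + i + 1 = (m + 4) + i by omega, pow_add, pow_add]; ring
      have h4mp : (0:ℝ) < 4 ^ m := by positivity
      have h4ip : (0:ℝ) < 4 ^ i := by positivity
      have hc := cc_pos (m + 3 + i)
      rw [div_le_iff₀ hc, hexp]
      have h14 : ((1:ℝ) / 4) ^ i = 1 / 4 ^ i := by rw [div_pow, one_pow]
      rw [h14]
      rw [hexp] at hcge
      have : (1:ℝ) / 8 * (1 / 4 ^ i) * (100 * (256 * 4 ^ m * 4 ^ i) - 1 / 2)
          ≥ 1 / 8 * (1 / 4 ^ i) * (50 * (256 * 4 ^ m * 4 ^ i)) := by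
        have h18 : (0:ℝ) < 1 / 8 * (1 / 4 ^ i) := by positivity
        nlinarith
      have heq : (1:ℝ) / 8 * (1 / 4 ^ i) * (50 * (256 * 4 ^ m * 4 ^ i)) = 1600 * 4 ^ m := by
        field_simp
        ring
      nlinarith
    calc ∑ i ∈ range (P - (m + 3)), (n:ℝ) / (100 * 4 ^ (m + 3 + i + 1) - 1 / 2)
        ≤ ∑ i ∈ range (P - (m + 3)), (1:ℝ) / 8 * (1 / 4) ^ i :=
          Finset.sum_le_sum (fun i _ => hterm i)
    _ ≤ 1 / 8 * (4 / 3) := by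
        rw [← Finset.mul_sum]
        have hts : ∑ i ∈ range (P - (m + 3)), ((1:ℝ) / 4) ^ i ≤ (1 - 1/4)⁻¹ := by
          have := Summable.sum_le_tsum (range (P - (m + 3))) (fun i _ => by positivity)
            (summable_geometric_of_lt_one (r := (1:ℝ)/4) (by norm_num) (by norm_num))
          rwa [tsum_geometric_of_lt_one (by norm_num) (by norm_num)] at this
        nlinarith [hts]
    _ ≤ 1 / 2 := by norm_num
  refine le_trans ?_ key
  linarith

lemma finite_bound (n m P : ℕ) (hn1 : 200 * 4 ^ m ≤ (n:ℝ)) (hn2 : (n:ℝ) ≤ 1000 * 4 ^ m)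
    (hP : m + 3 ≤ P) :
    (2:ℝ) ^ (m * m - m) * (1 / (64 * (n:ℝ))) ^ 3 * (1 / 2) ≤ |∏ j ∈ range P, gg n j| := by
  have hnpos : (0:ℝ) < n := by
    have : (0:ℝ) < 200 * 4 ^ m := by positivity
    linarith
  rw [Finset.abs_prod]
  rw [← Finset.prod_range_mul_prod_Ico (fun j => |gg n j|) hP,
    ← Finset.prod_range_mul_prod_Ico (fun j => |gg n j|) (by omega : m ≤ m + 3)]
  have h3 : ∏ j ∈ Finset.Ico (m + 3) P, |gg n j| = ∏ j ∈ Finset.Ico (m + 3) P, gg n j :=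
    Finset.prod_congr rfl fun j hj => abs_of_pos (by
      have h2 := gg_pos' n m j hn2 (Finset.mem_Ico.mp hj).1
      have hc := cc_pos j
      unfold gg
      have : (n:ℝ) / (100 * 4 ^ (j + 1) - 1 / 2) < 1 := by
        rw [div_lt_one hc]; linarith
      linarith)
  rw [h3]
  have b1 := head_bound n m hn1
  have b2 := middle_bound n m hn1
  have b3 := tail_bound n m P hn2
  have p1 : (0:ℝ) ≤ 2 ^ (m * m - m) := by positivity
  have p2 : (0:ℝ) ≤ (1 / (64 * (n:ℝ))) ^ 3 := by positivity
  have q1 : (0:ℝ) ≤ ∏ j ∈ range m, |gg n j| := Finset.prod_nonneg fun j _ => abs_nonneg _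
  have q2 : (0:ℝ) ≤ ∏ j ∈ Finset.Ico m (m + 3), |gg n j| :=
    Finset.prod_nonneg fun j _ => abs_nonneg _
  have step1 : (2:ℝ) ^ (m * m - m) * (1 / (64 * (n:ℝ))) ^ 3 ≤
      (∏ j ∈ range m, |gg n j|) * ∏ j ∈ Finset.Ico m (m + 3), |gg n j| :=
    mul_le_mul b1 b2 p2 q1
  exact mul_le_mul step1 b3 (by norm_num) (mul_nonneg q1 q2)

lemma tprod_bound (n m : ℕ) (hn1 : 200 * 4 ^ m ≤ (n:ℝ)) (hn2 : (n:ℝ) ≤ 1000 * 4 ^ m) :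
    (2:ℝ) ^ (m * m - m) * (1 / (64 * (n:ℝ))) ^ 3 * (1 / 2) ≤ |∏' j : ℕ, gg n j| := by
  refine ge_of_tendsto ((gg_mult n).hasProd.tendsto_prod_nat.abs) ?_
  rw [Filter.eventually_atTop]
  exact ⟨m + 3, fun P hP => finite_bound n m P hn1 hn2 hP⟩

set_option maxHeartbeats 1000000 in
lemma key_bound (M : ℕ) : ∀ᶠ n : ℕ in atTop, (n:ℝ) ^ M ≤ |∏' j : ℕ, gg n j| := by
  filter_upwards [eventually_ge_atTop (200 * 4 ^ (12 * M + 56))] with n hn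
  obtain ⟨m, hm⟩ : ∃ m, m = Nat.log 4 (n / 200) := ⟨_, rfl⟩
  have hpow1 : (1:ℕ) ≤ 4 ^ (12 * M + 56) := Nat.one_le_pow _ _ (by norm_num)
  have hd : 4 ^ (12 * M + 56) ≤ n / 200 := by
    rw [Nat.le_div_iff_mul_le (by norm_num)]; omega
  have hlog1 : 4 ^ m ≤ n / 200 := hm ▸ Nat.pow_log_le_self 4 (by omega)
  have hlog2 : n / 200 < 4 ^ (m + 1) := hm ▸ Nat.lt_pow_succ_log_self (by norm_num) _
  have hB : (4:ℕ) ^ (m + 1) = 4 * 4 ^ m := by rw [pow_succ]; ring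
  have hn1ℕ : 200 * 4 ^ m ≤ n := by omega
  have hn2ℕ : n ≤ 1000 * 4 ^ m := by omega
  have hmge : 12 * M + 56 ≤ m := by
    have : 4 ^ (12 * M + 56) < 4 ^ (m + 1) := by omega
    have := (Nat.pow_lt_pow_iff_right (by norm_num : 1 < 4)).mp this
    omega
  have hn1 : 200 * 4 ^ m ≤ (n:ℝ) := by exact_mod_cast hn1ℕ
  have hn2 : (n:ℝ) ≤ 1000 * 4 ^ m := by exact_mod_cast hn2ℕ
  have hnpos : (0:ℝ) < n := by
    have : (0:ℝ) < 200 * 4 ^ m := by positivity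
    linarith
  have hb := tprod_bound n m hn1 hn2
  have h2 : 1 ≤ m := by omega
  have h1 : (12 * M + 56) * m ≤ m * m := Nat.mul_le_mul_right m hmge
  have h3 : M ≤ m * M := Nat.le_mul_of_pos_left M (by omega)
  have e1 : 19 + 10 * (M + 3) + 2 * m * (M + 3) + m ≤ m * m := by linarith only [h1, h2, h3]
  have e2 : 19 + 10 * (M + 3) + 2 * m * (M + 3) ≤ m * m - m := by omega
  have hpow : (n:ℝ) ^ M * ((64 * (n:ℝ)) ^ 3 * 2) ≤ 2 ^ (m * m - m) := by
    calc (n:ℝ) ^ M * ((64 * (n:ℝ)) ^ 3 * 2) = 524288 * (n:ℝ) ^ (M + 3) := by ring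
    _ ≤ 524288 * (1000 * 4 ^ m) ^ (M + 3) := by
        have := pow_le_pow_left₀ (le_of_lt hnpos) hn2 (M + 3)
        linarith
    _ = 524288 * 1000 ^ (M + 3) * ((4:ℝ) ^ m) ^ (M + 3) := by rw [mul_pow]; ring
    _ ≤ 524288 * 1024 ^ (M + 3) * ((4:ℝ) ^ m) ^ (M + 3) := by
        gcongr <;> norm_num
    _ = 2 ^ (19 + 10 * (M + 3) + 2 * m * (M + 3)) := by
        rw [show (524288:ℝ) = 2 ^ 19 by norm_num, show (1024:ℝ) = 2 ^ 10 by norm_num,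
          show (4:ℝ) = 2 ^ 2 by norm_num, ← pow_mul, ← pow_mul, ← pow_mul,
          ← pow_add, ← pow_add]
        congr 1
        ring
    _ ≤ 2 ^ (m * m - m) := pow_le_pow_right₀ one_le_two e2
  have hden : (0:ℝ) < (64 * (n:ℝ)) ^ 3 * 2 := mul_pos (pow_pos (by linarith) 3) two_pos
  have hrw : (2:ℝ) ^ (m * m - m) * (1 / (64 * (n:ℝ))) ^ 3 * (1 / 2)
      = 2 ^ (m * m - m) / ((64 * (n:ℝ)) ^ 3 * 2) := by
    have hne : (n:ℝ) ≠ 0 := ne_of_gt hnpos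
    rw [div_pow, one_pow]
    field_simp
  refine le_trans ?_ hb
  rw [hrw, le_div_iff₀ hden]
  exact hpow

lemma tprod_pnat_eq (n : ℕ) :
    (∏' k : ℕ+, (1 - (n : ℝ) / (100 * 2 ^ (2 * (k : ℕ)) - 1 / 2))) = ∏' j : ℕ, gg n j := by
  rw [← Equiv.pnatEquivNat.symm.tprod_eq
    (fun k : ℕ+ => (1 - (n : ℝ) / (100 * 2 ^ (2 * (k : ℕ)) - 1 / 2)))]
  apply tprod_congr
  intro j
  have h1 : ((Equiv.pnatEquivNat.symm j : ℕ+) : ℕ) = j + 1 := by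
    simp [Equiv.pnatEquivNat]
  rw [h1]
  unfold gg
  rw [pow_mul]
  norm_num

/-- with `W(x) = ∏_{k≥1}(1 - x/(100·2^{2k} - 1/2))` and
`T(x) = sin(π√(x+1/2)/10)/(W(x)√(x+1/2))`, one has `T(n) = o(n^{-N})` as `n → +∞`
along the positive integers, for every `N`. -/
theorem stmt7 :
    ∀ N : ℕ,
      Filter.Tendsto
        (fun n : ℕ =>
          (n : ℝ) ^ N *
            |Real.sin (Real.pi * Real.sqrt ((n : ℝ) + 1 / 2) / 10) /
              ((∏' k : ℕ+, (1 - (n : ℝ) / (100 * 2 ^ (2 * (k : ℕ)) - 1 / 2))) *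
                Real.sqrt ((n : ℝ) + 1 / 2))|)
        Filter.atTop (nhds 0) := by
  intro N
  apply squeeze_zero' (g := fun n : ℕ => ((n : ℝ))⁻¹)
  · exact Filter.Eventually.of_forall fun n =>
      mul_nonneg (pow_nonneg (Nat.cast_nonneg n) _) (abs_nonneg _)
  · filter_upwards [key_bound (N + 1), eventually_ge_atTop 1] with n hW hn1
    have hn1R : (1:ℝ) ≤ n := by exact_mod_cast hn1
    rw [tprod_pnat_eq n]
    have hsq0 : (0:ℝ) ≤ Real.sqrt ((n : ℝ) + 1 / 2) := Real.sqrt_nonneg _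
    have hsq1 : (1:ℝ) ≤ Real.sqrt ((n : ℝ) + 1 / 2) := by
      have := Real.sqrt_le_sqrt (show (1:ℝ) ≤ (n:ℝ) + 1/2 by linarith)
      rwa [Real.sqrt_one] at this
    have hpowpos : (0:ℝ) < (n:ℝ) ^ (N + 1) := pow_pos (by linarith) _
    have hWpos : (0:ℝ) < |∏' j : ℕ, gg n j| := lt_of_lt_of_le hpowpos hW
    have habs : |Real.sin (Real.pi * Real.sqrt ((n : ℝ) + 1 / 2) / 10) /
        ((∏' j : ℕ, gg n j) * Real.sqrt ((n : ℝ) + 1 / 2))|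
        = |Real.sin (Real.pi * Real.sqrt ((n : ℝ) + 1 / 2) / 10)| /
          (|∏' j : ℕ, gg n j| * Real.sqrt ((n : ℝ) + 1 / 2)) := by
      rw [abs_div, abs_mul, abs_of_nonneg hsq0]
    rw [habs]
    have hdiv : |Real.sin (Real.pi * Real.sqrt ((n : ℝ) + 1 / 2) / 10)| /
          (|∏' j : ℕ, gg n j| * Real.sqrt ((n : ℝ) + 1 / 2))
        ≤ 1 / (n:ℝ) ^ (N + 1) := by
      apply div_le_div₀ zero_le_one (abs_le.mpr ⟨Real.neg_one_le_sin _, Real.sin_le_one _⟩) hpowpos ?_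
      calc (n:ℝ) ^ (N + 1) = (n:ℝ) ^ (N + 1) * 1 := by ring
      _ ≤ |∏' j : ℕ, gg n j| * Real.sqrt ((n : ℝ) + 1 / 2) :=
        mul_le_mul hW hsq1 zero_le_one (le_of_lt hWpos)
    calc (n : ℝ) ^ N * (|Real.sin (Real.pi * Real.sqrt ((n : ℝ) + 1 / 2) / 10)| /
          (|∏' j : ℕ, gg n j| * Real.sqrt ((n : ℝ) + 1 / 2)))
        ≤ (n : ℝ) ^ N * (1 / (n:ℝ) ^ (N + 1)) :=
          mul_le_mul_of_nonneg_left hdiv (pow_nonneg (by linarith) _)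
    _ = ((n : ℝ))⁻¹ := by
        rw [pow_succ]
        have hne : (n:ℝ) ≠ 0 := by linarith
        have hne2 : (n:ℝ) ^ N ≠ 0 := pow_ne_zero _ hne
        field_simp
  · exact tendsto_inv_atTop_zero.comp (tendsto_natCast_atTop_atTop)
end

section
/- Let G be an entire function with a simple zero at w ∈ ℂ, and suppose G is the Fourier transform of a compactly supported distribution φ on (a,b). Then G(z)/(z − w) is an entire function of the same exponential type, and it is the Fourier transform of a compactly supported distribution on (a,b) with support contained in the convex hull of the support of φ. -/
/-- if the entire function `G` has a simple zero at `w` and is the Fourier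
transform of a compactly supported distribution on `(a,b)` — encoded, via Paley–Wiener–Schwartz,
by the growth bound `‖G(z)‖ ≤ C(1+‖z‖)^N e^{max(-c·Im z, -d·Im z)}` for a compact interval
`[c,d] ⊂ (a,b)` — then `G(z)/(z-w)` extends to an entire function satisfying a bound of the
same form (same exponential type, support in the same interval). -/
theorem stmt10 (a b c d : ℝ) (hac : a < c) (hcd : c ≤ d) (hdb : d < b)
    (G : ℂ → ℂ) (hG : Differentiable ℂ G)
    (w : ℂ) (hw : G w = 0) (hw' : deriv G w ≠ 0)
    (C : ℝ) (N : ℕ)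
    (hbound : ∀ z : ℂ, ‖G z‖ ≤ C * (1 + ‖z‖) ^ N * Real.exp (max (-c * z.im) (-d * z.im))) :
    ∃ F : ℂ → ℂ, Differentiable ℂ F ∧ (∀ z : ℂ, z ≠ w → F z = G z / (z - w)) ∧
      ∃ C' : ℝ, ∃ N' : ℕ, ∀ z : ℂ,
        ‖F z‖ ≤ C' * (1 + ‖z‖) ^ N' * Real.exp (max (-c * z.im) (-d * z.im)) := by
  set F : ℂ → ℂ := dslope G w with hF
  have hFeq : ∀ z : ℂ, z ≠ w → F z = G z / (z - w) := by
    intro z hz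
    rw [hF, dslope_of_ne _ hz, slope_def_field, hw]
    field_simp
    simp
  have hGan : AnalyticOnNhd ℂ G Set.univ :=
    Complex.analyticOnNhd_univ_iff_differentiable.2 hG
  have hFdiff : Differentiable ℂ F := by
    intro z
    rcases eq_or_ne z w with rfl | hz
    · obtain ⟨p, hp⟩ := hGan z (Set.mem_univ z)
      obtain ⟨r, hp'⟩ := hp
      exact (HasFPowerSeriesAt.has_fpower_series_dslope_fslope ⟨r, hp'⟩).differentiableAt
    · have heq : F =ᶠ[nhds z] fun x => G x / (id x - w) := by
        filter_upwards [isOpen_ne.mem_nhds hz] with x hx using hFeq x hx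
      exact ((hG z).div (differentiableAt_id.sub (differentiableAt_const w))
        (sub_ne_zero.2 hz)).congr_of_eventuallyEq heq
  have hC : 0 ≤ C := by
    have h0 := hbound w
    rw [hw] at h0
    simp only [norm_zero] at h0
    rw [mul_assoc] at h0
    nlinarith [mul_pos (pow_pos (by linarith [norm_nonneg w] : (0:ℝ) < 1 + ‖w‖) N)
      (Real.exp_pos (max (-c * w.im) (-d * w.im)))]
  obtain ⟨M, hM⟩ := (isCompact_closedBall w 1).exists_bound_of_continuousOn
    hFdiff.continuous.continuousOn
  have hM0 : 0 ≤ M := le_trans (norm_nonneg _) (hM w (Metric.mem_closedBall_self zero_le_one))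
  set R : ℝ := (|c| + |d|) * (|w.im| + 1) with hR
  refine ⟨F, hFdiff, hFeq, C + M * Real.exp R, N, fun z => ?_⟩
  have hexp_pos : (0:ℝ) < Real.exp (max (-c * z.im) (-d * z.im)) := Real.exp_pos _
  have hpow1 : (1:ℝ) ≤ (1 + ‖z‖) ^ N := one_le_pow₀ (by linarith [norm_nonneg z])
  rcases le_or_gt ‖z - w‖ 1 with hnear | hfar
  · have him : |z.im| ≤ |w.im| + 1 := by
      have h1 : |(z - w).im| ≤ ‖z - w‖ := Complex.abs_im_le_norm _
      have h2 : (z - w).im = z.im - w.im := by simp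
      rw [h2] at h1
      have := abs_sub_abs_le_abs_sub z.im w.im
      linarith
    have hcz : c * z.im ≤ R := by
      calc c * z.im ≤ |c * z.im| := le_abs_self _
        _ = |c| * |z.im| := abs_mul _ _
        _ ≤ (|c| + |d|) * (|w.im| + 1) :=
            mul_le_mul (by linarith [abs_nonneg d]) him (abs_nonneg _) (by positivity)
    have hexp_lb : Real.exp (-R) ≤ Real.exp (max (-c * z.im) (-d * z.im)) :=
      Real.exp_le_exp.2 (le_trans (by linarith) (le_max_left _ _))
    have hFz : ‖F z‖ ≤ M := hM z (by simpa [Metric.mem_closedBall, dist_eq_norm] using hnear)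
    have key : M = M * Real.exp R * Real.exp (-R) := by
      rw [mul_assoc, ← Real.exp_add]; simp
    calc ‖F z‖ ≤ M := hFz
      _ = M * Real.exp R * Real.exp (-R) := key
      _ ≤ (M * Real.exp R) * ((1 + ‖z‖) ^ N * Real.exp (max (-c * z.im) (-d * z.im))) := by
          apply mul_le_mul_of_nonneg_left ?_ (by positivity)
          calc Real.exp (-R) ≤ Real.exp (max (-c * z.im) (-d * z.im)) := hexp_lb
            _ ≤ (1 + ‖z‖) ^ N * Real.exp (max (-c * z.im) (-d * z.im)) := by nlinarith
      _ ≤ (C + M * Real.exp R) * ((1 + ‖z‖) ^ N * Real.exp (max (-c * z.im) (-d * z.im))) := by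
          apply mul_le_mul_of_nonneg_right (by linarith) (by positivity)
      _ = (C + M * Real.exp R) * (1 + ‖z‖) ^ N * Real.exp (max (-c * z.im) (-d * z.im)) := by
          ring
  · have hzw : z ≠ w := by
      intro h; rw [h] at hfar; simp at hfar; linarith
    rw [hFeq z hzw, norm_div]
    calc ‖G z‖ / ‖z - w‖ ≤ ‖G z‖ := div_le_self (norm_nonneg _) hfar.le
      _ ≤ C * (1 + ‖z‖) ^ N * Real.exp (max (-c * z.im) (-d * z.im)) := hbound z
      _ ≤ (C + M * Real.exp R) * (1 + ‖z‖) ^ N * Real.exp (max (-c * z.im) (-d * z.im)) := by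
          apply mul_le_mul_of_nonneg_right ?_ hexp_pos.le
          apply mul_le_mul_of_nonneg_right ?_ (by positivity)
          nlinarith [Real.exp_pos R]
end
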